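/- arXiv:1112.4011 — 2 statements merged into one kernel-verified Lean document; each statement's English description precedes it below -/
import Mathlib

section
/- Let ĝ, f̂ be negative reals and ĉ ∈ ℂ. Consider the 2×2 Lyapunov equation A*P + PA = -H*H with A = [[0,1],[ĝ,f̂]] and H = [ĉ, 0]. Then A is Hurwitz, and writing P = [[x, z],[z̄, y]], the solution satisfies y = |ĉ|²/(2·ĝ·f̂). -/
open Matrix

theorem vehicular_lyapunov (g f : ℝ) (hg : g < 0) (hf : f < 0) (c : ℂ) :
    (∀ μ ∈ spectrum ℂ (!![0, 1; (g : ℂ), (f : ℂ)]), μ.re < 0) ∧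
      ∀ P : Matrix (Fin 2) (Fin 2) ℂ,
        (!![0, 1; (g : ℂ), (f : ℂ)])ᴴ * P + P * !![0, 1; (g : ℂ), (f : ℂ)] =
          -((!![c, 0] : Matrix (Fin 1) (Fin 2) ℂ)ᴴ * !![c, 0]) →
        P 1 1 = (‖c‖ ^ 2 / (2 * g * f) : ℝ) := by
  constructor
  · intro μ hμ
    rw [spectrum.mem_iff, Matrix.isUnit_iff_isUnit_det] at hμ
    have hdet : (algebraMap ℂ (Matrix (Fin 2) (Fin 2) ℂ) μ - !![0, 1; (g:ℂ), (f:ℂ)]).det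
        = μ * (μ - f) - g := by
      have : (algebraMap ℂ (Matrix (Fin 2) (Fin 2) ℂ) μ - !![0, 1; (g:ℂ), (f:ℂ)])
          = !![μ, -1; -g, μ - f] := by
        ext i j
        fin_cases i <;> fin_cases j <;>
          simp [Matrix.algebraMap_matrix_apply, sub_eq_add_neg]
      rw [this, Matrix.det_fin_two_of]
      ring
    rw [hdet, isUnit_iff_ne_zero, not_not] at hμ
    have hre : μ.re * (μ.re - f) - μ.im * μ.im - g = 0 := by
      have := congrArg Complex.re hμ
      simpa [Complex.mul_re, Complex.sub_re] using this
    have him : μ.im * (2 * μ.re - f) = 0 := by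
      have := congrArg Complex.im hμ
      simp [Complex.mul_im, Complex.sub_im] at this
      nlinarith [this]
    rcases mul_eq_zero.mp him with hb | hb
    · nlinarith [hre, hb, sq_nonneg μ.re]
    · nlinarith [hb]
  · intro P hP
    have e00 := congrFun (congrFun hP 0) 0
    have e11 := congrFun (congrFun hP 1) 1
    simp [Matrix.mul_apply, Fin.sum_univ_two, Matrix.add_apply, Matrix.neg_apply,
      Matrix.conjTranspose_apply] at e00 e11
    have habs : (starRingEnd ℂ) c * c = ((‖c‖ : ℝ) : ℂ) ^ 2 := by
      rw [mul_comm, Complex.mul_conj, Complex.normSq_eq_norm_sq]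
      norm_cast
    have hne : ((2 : ℂ) * g * f) ≠ 0 := by
      push_cast
      simp
      constructor <;> intro h <;> [exact absurd h hg.ne; exact absurd h hf.ne]
    push_cast
    rw [eq_div_iff hne]
    linear_combination -e00 + (g : ℂ) * e11 + habs
end

section
/- Let ĝ, f̂ be negative reals. For A = [[0,1],[ĝ,f̂]] and H = [ĝ, f̂] (control-effort output), the solution P = [[x,z],[z̄,y]] of A*P + PA = -H*H satisfies y = (1/2)·(-f̂ + ĝ/f̂), which is nonnegative. -/
open Matrix

theorem control_effort_lyapunov (g f : ℝ) (hg : g < 0) (hf : f < 0) :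
    ∀ P : Matrix (Fin 2) (Fin 2) ℂ,
      (!![0, 1; (g : ℂ), (f : ℂ)])ᴴ * P + P * !![0, 1; (g : ℂ), (f : ℂ)] =
        -((!![(g : ℂ), (f : ℂ)] : Matrix (Fin 1) (Fin 2) ℂ)ᴴ * !![(g : ℂ), (f : ℂ)]) →
      P 1 1 = (((1 / 2) * (-f + g / f) : ℝ) : ℂ) ∧ 0 ≤ (1 / 2) * (-f + g / f) := by
  intro P hP
  have hgC : (g : ℂ) ≠ 0 := by exact_mod_cast hg.ne
  have hfC : (f : ℂ) ≠ 0 := by exact_mod_cast hf.ne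
  have h00 := congrFun (congrFun hP 0) 0
  have h11 := congrFun (congrFun hP 1) 1
  simp [Matrix.mul_apply, Fin.sum_univ_two, Matrix.conjTranspose_apply,
    Matrix.add_apply, Matrix.neg_apply, Complex.conj_ofReal] at h00 h11
  have hsum : P 0 1 + P 1 0 = -(g:ℂ) := by
    have : (P 0 1 + P 1 0) * (g:ℂ) = -(g:ℂ) * (g:ℂ) := by linear_combination h00
    exact mul_right_cancel₀ hgC this
  constructor
  · have key : 2*(f:ℂ) * P 1 1 = -(f:ℂ)^2 + g := by linear_combination h11 - hsum
    have h2f : (2:ℂ)*(f:ℂ) ≠ 0 := mul_ne_zero two_ne_zero hfC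
    have hp : P 1 1 = (-(f:ℂ)^2 + g)/(2*f) := by
      rw [eq_div_iff h2f]; linear_combination key
    rw [hp]; push_cast; field_simp
  · have h1 : (0:ℝ) ≤ -f := by linarith
    have h2 : (0:ℝ) ≤ g / f := div_nonneg_of_nonpos hg.le hf.le
    nlinarith
end
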